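/- Define g : ℝ × (0,∞) → ℝ by g(x,t) = (x² + t²)/(2t) if |x| ≤ t and g(x,t) = |x| if |x| ≥ t. Let u₀ : ℝ → ℝ be 1-Lipschitz. Then for every x ∈ ℝ and t > 0, inf_{y ∈ ℝ} ( u₀(y) + g(x − y, t) ) = inf_{y ∈ ℝ} ( u₀(y) + (x − y)²/(2t) + t/2 ); that is, in the inf-convolution formula for the viscosity solution, the kernel g(·,t) may be replaced by the quadratic Hopf–Lax kernel (x−y)²/(2t) + t/2. -/

import Mathlib

open Real Set

/-- Rost's hydrodynamic limit profile for TASEP with step initial condition: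
`g(x,t) = (x²+t²)/(2t)` if `|x| ≤ t` and `g(x,t) = |x|` if `|x| ≥ t`. -/
noncomputable def rost (x t : ℝ) : ℝ := if |x| ≤ t then (x ^ 2 + t ^ 2) / (2 * t) else |x|

/-- for 1-Lipschitz `u₀`, in the inf-convolution formula the kernel `g(·,t)`
may be replaced by the quadratic Hopf–Lax kernel `(x−y)²/(2t) + t/2`. -/
theorem rost_infconv_eq_hopf_lax (u₀ : ℝ → ℝ) (hu₀ : LipschitzWith 1 u₀)
    (x t : ℝ) (ht : 0 < t) :
    (⨅ y : ℝ, (u₀ y + rost (x - y) t)) = ⨅ y : ℝ, (u₀ y + (x - y) ^ 2 / (2 * t) + t / 2) := by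
  have key : ∀ a b : ℝ, u₀ a ≤ u₀ b + |a - b| := by
    intro a b
    have h := hu₀.dist_le_mul a b
    rw [Real.dist_eq, Real.dist_eq, NNReal.coe_one, one_mul] at h
    have := le_abs_self (u₀ a - u₀ b)
    linarith
  have abs_le_rost : ∀ z : ℝ, |z| ≤ rost z t := by
    intro z
    unfold rost
    split_ifs with h
    · rw [le_div_iff₀ (by positivity)]
      nlinarith [sq_nonneg (|z| - t), sq_abs z]
    · exact le_refl _
  have abs_le_quad : ∀ z : ℝ, |z| ≤ z ^ 2 / (2 * t) + t / 2 := by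
    intro z
    rw [← sub_nonneg]
    have h : z ^ 2 / (2 * t) + t / 2 - |z| = (|z| - t) ^ 2 / (2 * t) := by
      field_simp
      nlinarith [sq_abs z]
    rw [h]
    positivity
  have bdd1 : BddBelow (range fun y => u₀ y + rost (x - y) t) := by
    refine ⟨u₀ x, forall_mem_range.mpr fun y => ?_⟩
    have := key x y
    have := abs_le_rost (x - y)
    linarith
  have bdd2 : BddBelow (range fun y => u₀ y + (x - y) ^ 2 / (2 * t) + t / 2) := by
    refine ⟨u₀ x, forall_mem_range.mpr fun y => ?_⟩
    have := key x y
    have := abs_le_quad (x - y)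
    linarith
  have rost_le : ∀ z : ℝ, rost z t ≤ z ^ 2 / (2 * t) + t / 2 := by
    intro z
    unfold rost
    split_ifs with h
    · apply le_of_eq
      field_simp
    · push_neg at h
      exact abs_le_quad z
  apply le_antisymm
  · refine le_ciInf fun y => le_trans (ciInf_le bdd1 y) ?_
    have := rost_le (x - y)
    linarith
  · refine le_ciInf fun y => ?_
    by_cases h : |x - y| ≤ t
    · have heq : rost (x - y) t = (x - y) ^ 2 / (2 * t) + t / 2 := by
        unfold rost
        rw [if_pos h]
        field_simp
      calc (⨅ z : ℝ, (u₀ z + (x - z) ^ 2 / (2 * t) + t / 2))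
          ≤ u₀ y + (x - y) ^ 2 / (2 * t) + t / 2 := ciInf_le bdd2 y
        _ = u₀ y + rost (x - y) t := by rw [heq]; ring
    · push_neg at h
      have hr : rost (x - y) t = |x - y| := by unfold rost; rw [if_neg (not_le.mpr h)]
      rw [hr]
      by_cases hs : 0 ≤ x - y
      · have habs : |x - y| = x - y := abs_of_nonneg hs
        have h1 : (⨅ z : ℝ, (u₀ z + (x - z) ^ 2 / (2 * t) + t / 2))
            ≤ u₀ (x - t) + (x - (x - t)) ^ 2 / (2 * t) + t / 2 := ciInf_le bdd2 (x - t)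
        have h2 : u₀ (x - t) ≤ u₀ y + |x - t - y| := key _ _
        have h3 : |x - t - y| = x - y - t := by
          rw [abs_of_nonneg]; · ring_nf
          rw [habs] at h; linarith
        have h4 : (x - (x - t)) ^ 2 / (2 * t) + t / 2 = t := by
          field_simp; ring
        rw [habs]
        rw [h3] at h2
        linarith
      · push_neg at hs
        have habs : |x - y| = y - x := by rw [abs_of_neg (by linarith)]; ring
        have h1 : (⨅ z : ℝ, (u₀ z + (x - z) ^ 2 / (2 * t) + t / 2))
            ≤ u₀ (x + t) + (x - (x + t)) ^ 2 / (2 * t) + t / 2 := ciInf_le bdd2 (x + t)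
        have h2 : u₀ (x + t) ≤ u₀ y + |x + t - y| := key _ _
        have h3 : |x + t - y| = y - x - t := by
          rw [habs] at h
          rw [abs_of_nonpos (by linarith)]; ring
        have h4 : (x - (x + t)) ^ 2 / (2 * t) + t / 2 = t := by
          field_simp; ring
        rw [habs]
        rw [h3] at h2
        linarith
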